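/- Let (X,d) be a compact metric space and let f_n : X → X (n ≥ 0) and f : X → X be continuous maps. Then f_n converges uniformly to f on X if and only if the pushforward maps f̂_n converge uniformly to f̂ on (𝓜(X), 𝓟_d). -/

import Mathlib

open MeasureTheory Filter

/-- `nacomp f n = f_{n-1} ∘ ⋯ ∘ f_0` (with `nacomp f 0 = id`): the time-`n` map of the
non-autonomous system `(X, f_{0,∞})`. -/
def nacomp {Y : Type*} (f : ℕ → Y → Y) : ℕ → Y → Y
  | 0 => id
  | n + 1 => f n ∘ nacomp f n

/-- The induced pushforward map `f̂` on the space `𝓜(X)` of Borel probability measures,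
equipped with the Lévy–Prokhorov metric. -/
noncomputable def inducedMap {X : Type*} [MetricSpace X] [MeasurableSpace X] [BorelSpace X]
    (f : X → X) (hf : Continuous f) :
    LevyProkhorov (ProbabilityMeasure X) → LevyProkhorov (ProbabilityMeasure X) :=
  fun μ => (LevyProkhorov.toMeasureEquiv (α := ProbabilityMeasure X)).symm
    (((LevyProkhorov.toMeasureEquiv (α := ProbabilityMeasure X)) μ).map hf.measurable.aemeasurable)

open Metric ENNReal in
lemma map_meas_le_aux {X : Type*} [MetricSpace X] [MeasurableSpace X] [BorelSpace X]
    (μ : Measure X) {f g : X → X} (hf : Measurable f) (hg : Measurable g)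
    {ε : ℝ} (hε : 0 < ε) (h : ∀ x, dist (f x) (g x) < ε)
    {ε' : ℝ≥0∞} (hε'1 : ENNReal.ofReal ε < ε') (hε'2 : ε' < ∞)
    {B : Set X} (hB : MeasurableSet B) :
    (μ.map f) B ≤ (μ.map g) (thickening ε'.toReal B) + ε' := by
  rw [Measure.map_apply hf hB, Measure.map_apply hg isOpen_thickening.measurableSet]
  have hεε' : ε < ε'.toReal := by
    have := ENNReal.toReal_lt_toReal (by simp) hε'2.ne |>.mpr hε'1
    rwa [ENNReal.toReal_ofReal hε.le] at this
  refine le_trans (measure_mono fun x hx => ?_) (le_add_right le_rfl)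
  exact mem_thickening_iff.mpr ⟨f x, hx, (dist_comm (g x) (f x) ▸ h x).trans hεε'⟩

open Metric ENNReal in
lemma edist_map_le {X : Type*} [MetricSpace X] [MeasurableSpace X] [BorelSpace X]
    (μ : Measure X) {f g : X → X} (hf : Measurable f) (hg : Measurable g)
    {ε : ℝ} (hε : 0 < ε) (h : ∀ x, dist (f x) (g x) < ε) :
    levyProkhorovEDist (μ.map f) (μ.map g) ≤ ENNReal.ofReal ε := by
  apply levyProkhorovEDist_le_of_forall
  intro ε' B hε'1 hε'2 hB
  refine ⟨map_meas_le_aux μ hf hg hε h hε'1 hε'2 hB,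
    map_meas_le_aux μ hg hf hε (fun x => dist_comm (f x) (g x) ▸ h x) hε'1 hε'2 hB⟩

/-- The Dirac measure as an element of the Lévy–Prokhorov space. -/
noncomputable def diracLP {X : Type*} [MetricSpace X] [MeasurableSpace X] [BorelSpace X]
    (x : X) : LevyProkhorov (ProbabilityMeasure X) :=
  (LevyProkhorov.toMeasureEquiv (α := ProbabilityMeasure X)).symm ⟨Measure.dirac x, inferInstance⟩

lemma toMeasure_inducedMap {X : Type*} [MetricSpace X] [MeasurableSpace X] [BorelSpace X]
    (f : X → X) (hf : Continuous f) (μ : LevyProkhorov (ProbabilityMeasure X)) :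
    (ProbabilityMeasure.toMeasure (inducedMap f hf μ).toMeasure)
      = Measure.map f (ProbabilityMeasure.toMeasure μ.toMeasure) :=
  ProbabilityMeasure.toMeasure_map _ hf.measurable.aemeasurable

/-- `f_n → f` uniformly on `X` iff the pushforward maps `f̂_n → f̂` uniformly on `(𝓜(X), 𝓟_d)`. -/
theorem tendstoUniformly_iff_induced_tendstoUniformly
    {X : Type*} [MetricSpace X] [CompactSpace X] [MeasurableSpace X] [BorelSpace X]
    (f : ℕ → X → X) (hf : ∀ n, Continuous (f n)) (g : X → X) (hg : Continuous g) :
    TendstoUniformly (fun n => f n) g atTop ↔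
      TendstoUniformly (fun n => inducedMap (f n) (hf n)) (inducedMap g hg) atTop := by
  rw [Metric.tendstoUniformly_iff, Metric.tendstoUniformly_iff]
  constructor
  · intro H ε hε
    filter_upwards [H (ε / 2) (half_pos hε)] with n hn μ
    have key : levyProkhorovEDist
        (Measure.map g (ProbabilityMeasure.toMeasure μ.toMeasure))
        (Measure.map (f n) (ProbabilityMeasure.toMeasure μ.toMeasure))
        ≤ ENNReal.ofReal (ε / 2) :=
      edist_map_le _ hg.measurable (hf n).measurable (half_pos hε) hn
    have : dist (inducedMap g hg μ) (inducedMap (f n) (hf n) μ) ≤ ε / 2 := by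
      rw [LevyProkhorov.dist_probabilityMeasure_def]
      show (levyProkhorovEDist _ _).toReal ≤ ε / 2
      rw [toMeasure_inducedMap, toMeasure_inducedMap]
      exact ENNReal.toReal_le_of_le_ofReal (half_pos hε).le key
    linarith
  · intro H ε hε
    set ε' : ℝ := min ε 2⁻¹ with hε'def
    have hε' : 0 < ε' := lt_min hε (by norm_num)
    filter_upwards [H ε' hε'] with n hn x
    have hd := hn (diracLP x)
    -- compute the distance between the images of the Dirac measure
    have hdist : dist (diracLP (g x)) (diracLP (f n x)) < ε' := by
      have e1 : inducedMap g hg (diracLP x) = diracLP (g x) := by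
        apply (LevyProkhorov.toMeasureEquiv (α := ProbabilityMeasure X)).injective
        apply ProbabilityMeasure.toMeasure_injective
        show ProbabilityMeasure.toMeasure (inducedMap g hg (diracLP x)).toMeasure = Measure.dirac (g x)
        rw [toMeasure_inducedMap]
        exact Measure.map_dirac' hg.measurable x
      have e2 : inducedMap (f n) (hf n) (diracLP x) = diracLP (f n x) := by
        apply (LevyProkhorov.toMeasureEquiv (α := ProbabilityMeasure X)).injective
        apply ProbabilityMeasure.toMeasure_injective
        show ProbabilityMeasure.toMeasure (inducedMap (f n) (hf n) (diracLP x)).toMeasure = Measure.dirac (f n x)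
        rw [toMeasure_inducedMap]
        exact Measure.map_dirac' (hf n).measurable x
      rwa [e1, e2] at hd
    have hedist : levyProkhorovEDist (Measure.dirac (g x)) (Measure.dirac (f n x))
        < ENNReal.ofReal ε' := by
      rw [ENNReal.lt_ofReal_iff_toReal_lt (levyProkhorovEDist_ne_top _ _)]
      exact hdist
    have hmem : f n x ∈ Metric.thickening (ENNReal.ofReal ε').toReal {g x} := by
      by_contra hcon
      have h1 : Measure.dirac (g x) {g x}
          ≤ Measure.dirac (f n x) (Metric.thickening (ENNReal.ofReal ε').toReal {g x})
            + ENNReal.ofReal ε' :=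
        left_measure_le_of_levyProkhorovEDist_lt hedist (measurableSet_singleton _)
      rw [Measure.dirac_apply' _ (measurableSet_singleton _),
        Measure.dirac_apply' _ Metric.isOpen_thickening.measurableSet] at h1
      simp only [Set.indicator_of_mem (Set.mem_singleton _),
        Set.indicator_of_notMem hcon, zero_add, Pi.one_apply] at h1
      have : ENNReal.ofReal ε' ≤ ENNReal.ofReal 2⁻¹ :=
        ENNReal.ofReal_le_ofReal (min_le_right _ _)
      have : (1 : ENNReal) ≤ ENNReal.ofReal 2⁻¹ := le_trans h1 this
      rw [ENNReal.one_le_ofReal] at this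
      norm_num at this
    rw [ENNReal.toReal_ofReal hε'.le] at hmem
    obtain ⟨z, hz, hzd⟩ := Metric.mem_thickening_iff.mp hmem
    rw [Set.mem_singleton_iff] at hz
    subst hz
    rw [dist_comm]
    exact hzd.trans_le (min_le_left _ _)
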